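/- Let p be a prime and let x, z be integers with x(3x^4 + 20x^2 + 10) = z^p. Set α = gcd(x, 10). Then there exist integers z₁ and z₂ such that x = α^(p-1)·z₁^p and 3x^4 + 20x^2 + 10 = α·z₂^p. -/

import Mathlib

/-- Sign handling: associated to a p-th power and (nonneg or odd exponent) gives exact power. -/
lemma pow_of_assoc (p : ℕ) (u a : ℤ) (hu : 0 ≤ u ∨ Odd p) (h : Associated (a^p) u) :
    ∃ b : ℤ, u = b^p := by
  obtain ⟨ε, hε⟩ := h
  obtain h1 | h1 := Int.units_eq_one_or ε
  · exact ⟨a, by simp [h1] at hε; omega⟩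
  · rw [h1] at hε
    simp only [Units.val_neg, Units.val_one, mul_neg_one] at hε
    rcases hu with hu | ho
    · rcases Nat.even_or_odd p with he | ho
      · have h0 : a ^ p = 0 := le_antisymm (by omega) (he.pow_nonneg a)
        have hpne : p ≠ 0 := by rintro rfl; simp at h0
        exact ⟨0, by rw [zero_pow hpne]; omega⟩
      · exact ⟨-a, by rw [ho.neg_pow]; omega⟩
    · exact ⟨-a, by rw [ho.neg_pow]; omega⟩

lemma helper (p : ℕ) (hp : p.Prime) (x z d B : ℤ) (hx0 : x ≠ 0) (hd : 0 < d)
    (hdsq : Squarefree d) (hdx : d ∣ x) (hdB : d ∣ B)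
    (hB2 : ∀ q : ℤ, Prime q → q ∣ d → ¬ q^2 ∣ B)
    (hcop : ∀ q : ℤ, Prime q → q ∣ x → q ∣ B → q ∣ d)
    (hBpos : 0 < B) (h : x * B = z ^ p) :
    ∃ z₁ z₂ : ℤ, x = d^(p-1) * z₁^p ∧ B = d * z₂^p := by
  have hd0 : d ≠ 0 := hd.ne'
  -- d ∣ z
  have hdz : d ∣ z := hdsq.isRadical p z (h ▸ (hdx.mul_right B))
  obtain ⟨v, hv⟩ := hdB
  obtain ⟨w, hw⟩ := hdz
  -- key coprimality: d and v
  have hdv : IsCoprime d v := by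
    rw [Int.isCoprime_iff_gcd_eq_one]
    by_contra hg
    have hg1 : 1 < Int.gcd d v := by
      have h0 : Int.gcd d v ≠ 0 := fun hh => hd0 (Int.gcd_eq_zero_iff.mp hh).1
      omega
    set n := (Int.gcd d v).minFac with hn
    have hnp : n.Prime := Nat.minFac_prime (by omega)
    have hnd : (n : ℤ) ∣ d := dvd_trans (Int.natCast_dvd_natCast.mpr (Nat.minFac_dvd _)) (Int.gcd_dvd_left _ _)
    have hnv : (n : ℤ) ∣ v := dvd_trans (Int.natCast_dvd_natCast.mpr (Nat.minFac_dvd _)) (Int.gcd_dvd_right _ _)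
    exact hB2 n (Nat.prime_iff_prime_int.mp hnp) hnd
      (by rw [hv, sq]; exact mul_dvd_mul hnd hnv)
  -- d^(p-1) ∣ x
  have hp1 : p = (p-1) + 1 := by have := hp.pos; omega
  have hdp : d^p = d^(p-1) * d := by nth_rewrite 1 [hp1]; rw [pow_succ]
  have key : x * v = d^(p-1) * w^p := by
    have : x * v * d = d^(p-1) * w^p * d :=
      calc x * v * d = x * B := by rw [hv]; ring
        _ = z ^ p := h
        _ = (d*w) ^ p := by rw [hw]
        _ = d^(p-1) * w^p * d := by rw [mul_pow, hdp]; ring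
    exact mul_right_cancel₀ hd0 this
  have hdx1 : d^(p-1) ∣ x := (IsCoprime.pow_left (m := p-1) hdv).dvd_of_dvd_mul_right
    ⟨w^p, key⟩
  obtain ⟨u, hu⟩ := hdx1
  have hu0 : u ≠ 0 := by rintro rfl; simp at hu; exact hx0 hu
  have huv : u * v = w ^ p := by
    have : d^(p-1) * (u * v) = d^(p-1) * w^p := by rw [← key, hu]; ring
    exact mul_left_cancel₀ (pow_ne_zero _ hd0) this
  -- coprimality of u and v
  have hcuv : IsCoprime u v := by
    rw [Int.isCoprime_iff_gcd_eq_one]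
    by_contra hg
    have hg1 : 1 < Int.gcd u v := by
      have h0 : Int.gcd u v ≠ 0 := fun hh => hu0 (Int.gcd_eq_zero_iff.mp hh).1
      omega
    set n := (Int.gcd u v).minFac with hn
    have hnp : n.Prime := Nat.minFac_prime (by omega)
    have hnu : (n : ℤ) ∣ u := dvd_trans (Int.natCast_dvd_natCast.mpr (Nat.minFac_dvd _)) (Int.gcd_dvd_left _ _)
    have hnv : (n : ℤ) ∣ v := dvd_trans (Int.natCast_dvd_natCast.mpr (Nat.minFac_dvd _)) (Int.gcd_dvd_right _ _)
    have hnx : (n : ℤ) ∣ x := hu ▸ hnu.mul_left _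
    have hnB : (n : ℤ) ∣ B := hv ▸ hnv.mul_left _
    have hnd : (n : ℤ) ∣ d := hcop n (Nat.prime_iff_prime_int.mp hnp) hnx hnB
    exact (Nat.prime_iff_prime_int.mp hnp).not_unit (hdv.isUnit_of_dvd' hnd hnv)
  -- v > 0
  have hv0 : 0 < v := by
    rcases lt_trichotomy v 0 with hlt | rfl | hgt
    · nlinarith
    · simp at hv; omega
    · exact hgt
  -- extract powers
  obtain ⟨a, ha⟩ := exists_associated_pow_of_mul_eq_pow' hcuv huv
  obtain ⟨b, hb⟩ := exists_associated_pow_of_mul_eq_pow' hcuv.symm (by rw [mul_comm]; exact huv)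
  have hupos : 0 ≤ u ∨ Odd p := by
    rcases Nat.even_or_odd p with he | ho
    · left
      have : 0 ≤ u * v := huv ▸ he.pow_nonneg w
      nlinarith
    · right; exact ho
  obtain ⟨z₁, hz₁⟩ := pow_of_assoc p u a hupos ha
  obtain ⟨z₂, hz₂⟩ := pow_of_assoc p v b (Or.inl hv0.le) hb
  exact ⟨z₁, z₂, by rw [hu, hz₁, mul_comm], by rw [hv, hz₂]⟩

theorem factorization_lemma (p : ℕ) (hp : p.Prime) (x z : ℤ)
    (h : x * (3*x^4 + 20*x^2 + 10) = z^p) :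
    ∃ z₁ z₂ : ℤ, x = (Int.gcd x 10 : ℤ)^(p-1) * z₁^p ∧
      3*x^4 + 20*x^2 + 10 = (Int.gcd x 10 : ℤ) * z₂^p := by
  rcases eq_or_ne x 0 with rfl | hx0
  · refine ⟨0, 1, ?_, ?_⟩
    · rw [zero_pow hp.ne_zero]; ring
    · norm_num
  set d : ℤ := (Int.gcd x 10 : ℤ) with hdd
  have hdx : d ∣ x := Int.gcd_dvd_left _ _
  have hd10 : d ∣ 10 := Int.gcd_dvd_right _ _
  have hd : 0 < d := by
    have : Int.gcd x 10 ≠ 0 := by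
      simp [Int.gcd_eq_zero_iff]
    positivity
  have hdsq : Squarefree d := by
    have h10 : Squarefree (10 : ℤ) := by
      rw [show ((10:ℤ)) = ((10:ℕ) : ℤ) by norm_num, Int.squarefree_natCast,
        Nat.squarefree_iff_prime_squarefree]
      intro q hq hdvd
      have h2 := hq.two_le
      have h10 : q * q ≤ 10 := Nat.le_of_dvd (by norm_num) hdvd
      have h3 : q ≤ 3 := by nlinarith
      interval_cases q <;> revert hdvd <;> decide
    exact h10.squarefree_of_dvd hd10
  have hdB : d ∣ 3*x^4 + 20*x^2 + 10 := by
    obtain ⟨c, hc⟩ := hdx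
    obtain ⟨e, he⟩ := hd10
    refine ⟨3*d^3*c^4 + 20*d*c^2 + e, ?_⟩
    rw [hc]
    calc 3*(d*c)^4 + 20*(d*c)^2 + 10 = 3*(d*c)^4 + 20*(d*c)^2 + d*e := by rw [← he]
      _ = d * (3*d^3*c^4 + 20*d*c^2 + e) := by ring
  have hB2 : ∀ q : ℤ, Prime q → q ∣ d → ¬ q^2 ∣ (3*x^4 + 20*x^2 + 10) := by
    intro q hq hqd hq2
    have hqx : q ∣ x := hqd.trans hdx
    obtain ⟨c, hc⟩ := hqx
    have hq210 : q^2 ∣ 10 := by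
      have h1 : q^2 ∣ 3*x^4 + 20*x^2 := ⟨3*q^2*c^4 + 20*c^2, by rw [hc]; ring⟩
      have := hq2.sub h1
      simpa using this
    have hn2 : q.natAbs^2 ∣ 10 := by
      have := Int.natAbs_dvd_natAbs.mpr hq210
      simpa [Int.natAbs_pow] using this
    have hnp : q.natAbs.Prime := Int.prime_iff_natAbs_prime.mp hq
    have h2le := hnp.two_le
    have hle : q.natAbs^2 ≤ 10 := Nat.le_of_dvd (by norm_num) hn2
    have hle2 : q.natAbs ≤ 3 := by nlinarith
    interval_cases hh : q.natAbs <;> revert hn2 <;> decide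
  have hcop : ∀ q : ℤ, Prime q → q ∣ x → q ∣ (3*x^4 + 20*x^2 + 10) → q ∣ d := by
    intro q hq hqx hqB
    obtain ⟨c, hc⟩ := hqx
    have hq10 : q ∣ 10 := by
      have h1 : q ∣ 3*x^4 + 20*x^2 := ⟨3*q^3*c^4 + 20*q*c^2, by rw [hc]; ring⟩
      have := hqB.sub h1
      simpa using this
    exact Int.dvd_coe_gcd ⟨c, hc⟩ hq10
  have hBpos : (0:ℤ) < 3*x^4 + 20*x^2 + 10 := by positivity
  exact helper p hp x z d _ hx0 hd hdsq (Int.gcd_dvd_left _ _) hdB hB2 hcop hBpos h
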